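/- Let x_1 ≥ x_2 ≥ ... ≥ x_n be positive integers with Σ_{i=1}^n 2^{−x_i} ≥ 1. Then there exists a family of color lists L = {L_i}_{i∈[n]} with |L_i| = x_i for each i such that the discrete interval hypergraph H_n admits no unique-maximum coloring from L. -/

import Mathlib

lemma mono_of_adj (m : ℕ) (f : ℕ → ℕ) (h : ∀ i, 1 ≤ i → i + 1 ≤ m → f i ≤ f (i + 1)) :
    ∀ i ∈ Finset.Icc 1 m, ∀ j ∈ Finset.Icc 1 m, i ≤ j → f i ≤ f j := by
  have key : ∀ j, ∀ i, 1 ≤ i → i ≤ j → j ≤ m → f i ≤ f j := by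
    intro j
    induction j with
    | zero => intro i h1 h2 _; omega
    | succ j IHj =>
      intro i h1 h2 h3
      rcases eq_or_lt_of_le h2 with rfl | hlt
      · exact le_rfl
      · exact le_trans (IHj i h1 (by omega) (by omega)) (h j (by omega) h3)
  intro i hi j hj hij
  simp only [Finset.mem_Icc] at hi hj
  exact key j i hi.1 hij hj.2

lemma sum_Ioc_shift (a b : ℕ) (g : ℕ → ℕ) :
    (∑ i ∈ Finset.Ioc a b, g (i + 1)) = ∑ i ∈ Finset.Ioc (a + 1) (b + 1), g i := by
  apply Finset.sum_bij' (fun i (_ : i ∈ Finset.Ioc a b) => i + 1)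
    (fun i (_ : i ∈ Finset.Ioc (a+1) (b+1)) => i - 1)
  · intro i hi; simp only [Finset.mem_Ioc] at hi ⊢; omega
  · intro i hi; simp only [Finset.mem_Ioc] at hi ⊢; omega
  · intro i hi; rfl
  · intro i hi; simp only [Finset.mem_Ioc] at hi; omega
  · intro i hi; rfl

theorem core_blocked : ∀ m : ℕ, ∀ D : ℕ, ∀ y : ℕ → ℕ,
    (∀ i ∈ Finset.Icc 1 m, y i ≤ D) →
    (∀ i ∈ Finset.Icc 1 m, ∀ j ∈ Finset.Icc 1 m, i ≤ j → y i ≤ y j) →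
    (∑ i ∈ Finset.Icc 1 m, 2 ^ (D - y i) = 2 ^ D) →
    ∃ L : ℕ → Finset ℕ,
      (∀ i ∈ Finset.Icc 1 m, (L i).card = y i) ∧
      (∀ i ∈ Finset.Icc 1 m, ∀ c ∈ L i, 0 < c) ∧
      ¬ ∃ C : ℕ → ℕ, (∀ i ∈ Finset.Icc 1 m, C i ∈ L i) ∧
        ∀ s t : ℕ, 1 ≤ s → s ≤ t → t ≤ m →
          ∃ v ∈ Finset.Icc s t, ∀ u ∈ Finset.Icc s t, u ≠ v → C u < C v := by
  intro m
  induction m using Nat.strong_induction_on with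
  | _ m IH =>
  intro D y hb hs hsum
  rcases Nat.eq_zero_or_pos m with rfl | hm1
  · simp only [show Finset.Icc 1 0 = ∅ by rfl, Finset.sum_empty] at hsum
    have := Nat.two_pow_pos D; omega
  rcases eq_or_lt_of_le (show 1 ≤ m from hm1) with hm1' | hm2
  · -- m = 1
    obtain rfl : m = 1 := hm1'.symm
    have h1 : (2:ℕ) ^ (D - y 1) = 2 ^ D := by simpa using hsum
    have hy1 : y 1 = 0 := by
      have hd : D - y 1 = D := Nat.pow_right_injective (le_refl 2) h1
      have := hb 1 (by simp); omega
    refine ⟨fun _ => ∅, by simp [hy1], by simp, ?_⟩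
    rintro ⟨C, hC, -⟩
    exact absurd (hC 1 (by simp)) (by simp)
  -- now 2 ≤ m
  set E := y m with hEdef
  have hmIcc : m ∈ Finset.Icc 1 m := by simp only [Finset.mem_Icc]; omega
  have hED : E ≤ D := hb m hmIcc
  have hyleE : ∀ i ∈ Finset.Icc 1 m, y i ≤ E := by
    intro i hi
    exact hs i hi m hmIcc (by simp only [Finset.mem_Icc] at hi; omega)
  have hE1 : 1 ≤ E := by
    by_contra hE0
    have hcongr : ∀ i ∈ Finset.Icc 1 m, (2:ℕ) ^ (D - y i) = 2 ^ D := by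
      intro i hi
      have h1 := hyleE i hi
      have h0 : y i = 0 := by omega
      rw [h0, Nat.sub_zero]
    rw [Finset.sum_congr rfl hcongr, Finset.sum_const, Nat.card_Icc, Nat.add_sub_cancel, smul_eq_mul] at hsum
    have h2 : 0 < 2 ^ D := Nat.two_pow_pos D
    have h4 : m * 2 ^ D = 1 * 2 ^ D := by
      rw [one_mul]; exact hsum
    have := Nat.eq_of_mul_eq_mul_right h2 h4
    omega
  have hm' : m - 1 + 1 = m := by omega
  have hsplit := Finset.sum_Icc_succ_top (a := 1) (b := m - 1) (by omega)
    (fun i => (2:ℕ) ^ (D - y i))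
  rw [hm'] at hsplit
  rw [hsplit] at hsum
  rw [← hEdef] at hsum
  -- hsum : ∑ i in Icc 1 (m-1), 2^(D - y i) + 2^(D - y m) = 2^D
  have hex : ∃ i ∈ Finset.Icc 1 (m-1), y i = E := by
    by_contra hno
    push_neg at hno
    have hdvd1 : (2:ℕ) ^ (D - E + 1) ∣ ∑ i ∈ Finset.Icc 1 (m-1), 2 ^ (D - y i) := by
      apply Finset.dvd_sum
      intro i hi
      apply pow_dvd_pow
      have h1 : y i ≤ E := hyleE i
        (by simp only [Finset.mem_Icc] at hi ⊢; omega)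
      have h2 := hno i hi
      omega
    have hdvd2 : (2:ℕ) ^ (D - E + 1) ∣ 2 ^ D := pow_dvd_pow 2 (by omega)
    have hdvd3 : (2:ℕ) ^ (D - E + 1) ∣ 2 ^ (D - E) := by
      have heq : (2:ℕ) ^ (D - E) = 2 ^ D - ∑ i ∈ Finset.Icc 1 (m-1), 2 ^ (D - y i) := by
        omega
      rw [heq]
      exact Nat.dvd_sub hdvd2 hdvd1
    have h5 := Nat.le_of_dvd (Nat.two_pow_pos _) hdvd3
    have h4 : (2:ℕ) ^ (D - E) < 2 ^ (D - E + 1) := Nat.pow_lt_pow_succ (by omega)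
    omega
  obtain ⟨i0, hi00, hi0E⟩ := hex
  set S := (Finset.Icc 1 (m-1)).filter (fun i => y i = E) with hSdef
  have hSne : S.Nonempty := ⟨i0, by simp only [hSdef, Finset.mem_filter]; exact ⟨hi00, hi0E⟩⟩
  set p := S.min' hSne with hpdef
  have hpS : p ∈ S := S.min'_mem hSne
  have hpfacts : (1 ≤ p ∧ p ≤ m - 1) ∧ y p = E := by
    simpa only [hSdef, Finset.mem_filter, Finset.mem_Icc] using hpS
  obtain ⟨⟨hp1, hpm⟩, hpE⟩ := hpfacts
  have hbefore : ∀ i, 1 ≤ i → i < p → y i ≤ E - 1 := by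
    intro i h1 h2
    have hle : y i ≤ E := hyleE i (by simp only [Finset.mem_Icc]; omega)
    have hne : y i ≠ E := by
      intro hEq
      have hiS : i ∈ S := by
        simp only [hSdef, Finset.mem_filter, Finset.mem_Icc]
        exact ⟨⟨h1, by omega⟩, hEq⟩
      have := S.min'_le i hiS
      omega
    omega
  have hp1E : y (p+1) = E := by
    have h1 : y p ≤ y (p+1) := hs p (by simp only [Finset.mem_Icc]; omega)
      (p+1) (by simp only [Finset.mem_Icc]; omega) (by omega)
    have h2 : y (p+1) ≤ E := hyleE (p+1) (by simp only [Finset.mem_Icc]; omega)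
    omega
  clear hpS
  clear_value p
  clear hSne hi00 hi0E hSdef hpdef
  set y' : ℕ → ℕ := fun i => if i < p then y i else if i = p then E - 1 else y (i+1)
    with hy'def
  have hy'lt : ∀ i, i < p → y' i = y i := by
    intro i h; simp only [hy'def]; rw [if_pos h]
  have hy'p : y' p = E - 1 := by
    simp only [hy'def]
    rw [if_neg (by omega : ¬ p < p)]
    simp
  have hy'gt : ∀ i, p < i → y' i = y (i + 1) := by
    intro i h; simp only [hy'def]; rw [if_neg (by omega), if_neg (by omega)]
  clear_value y'
  clear hy'def
  have hb' : ∀ i ∈ Finset.Icc 1 (m-1), y' i ≤ D := by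
    intro i hi
    simp only [Finset.mem_Icc] at hi
    rcases lt_trichotomy i p with h1 | h1 | h1
    · rw [hy'lt i h1]; exact hb i (by simp only [Finset.mem_Icc]; omega)
    · rw [h1, hy'p]; omega
    · rw [hy'gt i h1]; exact hb (i+1) (by simp only [Finset.mem_Icc]; omega)
  have hs' : ∀ i ∈ Finset.Icc 1 (m-1), ∀ j ∈ Finset.Icc 1 (m-1), i ≤ j → y' i ≤ y' j := by
    apply mono_of_adj
    intro i h1 h2
    rcases lt_trichotomy (i+1) p with hc | hc | hc
    · rw [hy'lt i (by omega), hy'lt (i+1) hc]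
      exact hs i (by simp only [Finset.mem_Icc]; omega)
        (i+1) (by simp only [Finset.mem_Icc]; omega) (by omega)
    · rw [hy'lt i (by omega), hc, hy'p]
      exact hbefore i h1 (by omega)
    · rcases eq_or_lt_of_le (by omega : p ≤ i) with rfl | hpi
      · rw [hy'p, hy'gt (p+1) (by omega)]
        have h3 : y (p+1) ≤ y (p+1+1) := hs (p+1) (by simp only [Finset.mem_Icc]; omega)
          (p+2) (by simp only [Finset.mem_Icc]; omega) (by omega)
        omega
      · rw [hy'gt i hpi, hy'gt (i+1) (by omega)]
        exact hs (i+1) (by simp only [Finset.mem_Icc]; omega)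
          (i+2) (by simp only [Finset.mem_Icc]; omega) (by omega)
  -- the sum for y'
  have hIcc : ∀ k : ℕ, Finset.Icc 1 k = Finset.Ioc 0 k := fun k => Finset.Icc_add_one_left_eq_Ioc 0 k
  have hpair : Finset.Ioc (p-1) (p+1) = {p, p+1} := by
    ext a
    simp only [Finset.mem_Ioc, Finset.mem_insert, Finset.mem_singleton]
    omega
  have hsingle : Finset.Ioc (p-1) p = {p} := by
    ext a
    simp only [Finset.mem_Ioc, Finset.mem_singleton]
    omega
  have hold : ∑ i ∈ Finset.Icc 1 m, 2 ^ (D - y i)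
      = (∑ i ∈ Finset.Ioc 0 (p-1), 2 ^ (D - y i)) + (2 ^ (D-E) + 2 ^ (D-E))
        + ∑ i ∈ Finset.Ioc (p+1) m, 2 ^ (D - y i) := by
    rw [hIcc]
    rw [← Finset.sum_Ioc_consecutive (fun i => (2:ℕ) ^ (D - y i))
      (show (0:ℕ) ≤ p+1 by omega) (show p+1 ≤ m by omega)]
    rw [← Finset.sum_Ioc_consecutive (fun i => (2:ℕ) ^ (D - y i))
      (show (0:ℕ) ≤ p-1 by omega) (show p-1 ≤ p+1 by omega)]
    rw [hpair, Finset.sum_pair (by omega : p ≠ p + 1), hpE, hp1E]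
  have hnew : ∑ i ∈ Finset.Icc 1 (m-1), 2 ^ (D - y' i)
      = (∑ i ∈ Finset.Ioc 0 (p-1), 2 ^ (D - y i)) + 2 ^ (D-(E-1))
        + ∑ i ∈ Finset.Ioc (p+1) m, 2 ^ (D - y i) := by
    rw [hIcc]
    rw [← Finset.sum_Ioc_consecutive (fun i => (2:ℕ) ^ (D - y' i))
      (show (0:ℕ) ≤ p by omega) (show p ≤ m-1 by omega)]
    rw [← Finset.sum_Ioc_consecutive (fun i => (2:ℕ) ^ (D - y' i))
      (show (0:ℕ) ≤ p-1 by omega) (show p-1 ≤ p by omega)]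
    congr 1
    · congr 1
      · apply Finset.sum_congr rfl
        intro i hi
        simp only [Finset.mem_Ioc] at hi
        rw [hy'lt i (by omega)]
      · rw [hsingle, Finset.sum_singleton, hy'p]
    · have hstep : ∀ i ∈ Finset.Ioc p (m-1), (2:ℕ) ^ (D - y' i) = 2 ^ (D - y (i+1)) := by
        intro i hi
        simp only [Finset.mem_Ioc] at hi
        rw [hy'gt i (by omega)]
      rw [Finset.sum_congr rfl hstep]
      rw [sum_Ioc_shift p (m-1) (fun i => (2:ℕ) ^ (D - y i)), hm']
  have hdouble : (2:ℕ) ^ (D - (E-1)) = 2 ^ (D-E) + 2 ^ (D-E) := by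
    rw [show D - (E-1) = (D-E)+1 by omega, pow_succ]
    ring
  have hsum' : ∑ i ∈ Finset.Icc 1 (m-1), 2 ^ (D - y' i) = 2 ^ D := by
    rw [hnew, hdouble]
    rw [hsplit] at hold
    rw [← hEdef] at hold
    omega
  obtain ⟨L', hcard', hpos', hblock'⟩ := IH (m-1) (by omega) D y' hb' hs' hsum'
  set L'' : ℕ → Finset ℕ := fun i => (L' i).image (· + 1) with hL''def
  have hL''card : ∀ i, (L'' i).card = (L' i).card := by
    intro i
    exact Finset.card_image_of_injective _ (fun a b hab => by omega)
  have hL''mem : ∀ i c, c ∈ L'' i ↔ ∃ a ∈ L' i, a + 1 = c := by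
    intro i c
    simp only [hL''def, Finset.mem_image]
  have hone : (1:ℕ) ∉ L'' p := by
    rw [hL''mem]
    rintro ⟨c, hc, hc1⟩
    have := hpos' p (Finset.mem_Icc.mpr ⟨by omega, by omega⟩) c hc
    omega
  clear_value L''
  clear hL''def
  set L : ℕ → Finset ℕ := fun i =>
    if i < p then L'' i else if i ≤ p + 1 then insert 1 (L'' p) else L'' (i - 1) with hLdef
  have hLlt : ∀ i, i < p → L i = L'' i := by
    intro i h; simp only [hLdef]; rw [if_pos h]
  have hLmid : ∀ i, (i = p ∨ i = p + 1) → L i = insert 1 (L'' p) := by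
    intro i h
    simp only [hLdef]
    rw [if_neg (by omega : ¬ i < p), if_pos (by omega : i ≤ p + 1)]
  have hLgt : ∀ i, p + 1 < i → L i = L'' (i - 1) := by
    intro i h; simp only [hLdef]; rw [if_neg (by omega), if_neg (by omega)]
  clear_value L
  clear hLdef
  -- cards
  have hLcard : ∀ i ∈ Finset.Icc 1 m, (L i).card = y i := by
    intro i hi
    simp only [Finset.mem_Icc] at hi
    rcases (by omega : i < p ∨ (i = p ∨ i = p + 1) ∨ p + 1 < i) with h1 | h1 | h1
    · rw [hLlt i h1, hL''card, hcard' i (Finset.mem_Icc.mpr ⟨by omega, by omega⟩), hy'lt i h1]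
    · rw [hLmid i h1, Finset.card_insert_of_notMem hone, hL''card,
        hcard' p (Finset.mem_Icc.mpr ⟨by omega, by omega⟩), hy'p]
      rcases h1 with h1 | h1 <;> rw [h1] <;> omega
    · rw [hLgt i h1, hL''card, hcard' (i-1) (Finset.mem_Icc.mpr ⟨by omega, by omega⟩),
        hy'gt (i-1) (by omega), show i - 1 + 1 = i by omega]
  -- positivity
  have hLpos : ∀ i ∈ Finset.Icc 1 m, ∀ c ∈ L i, 0 < c := by
    intro i hi c hc
    simp only [Finset.mem_Icc] at hi
    rcases (by omega : i < p ∨ (i = p ∨ i = p + 1) ∨ p + 1 < i) with h1 | h1 | h1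
    · rw [hLlt i h1, hL''mem] at hc
      obtain ⟨a, -, ha⟩ := hc; omega
    · rw [hLmid i h1] at hc
      rcases Finset.mem_insert.mp hc with rfl | hc2
      · omega
      · rw [hL''mem] at hc2; obtain ⟨a, -, ha⟩ := hc2; omega
    · rw [hLgt i h1, hL''mem] at hc
      obtain ⟨a, -, ha⟩ := hc; omega
  refine ⟨L, hLcard, hLpos, ?_⟩
  rintro ⟨C, hC, hUM⟩
  have hCpos : ∀ u, 1 ≤ u → u ≤ m → 1 ≤ C u := by
    intro u h1 h2
    exact hLpos u (Finset.mem_Icc.mpr ⟨h1, h2⟩) (C u) (hC u (Finset.mem_Icc.mpr ⟨h1, h2⟩))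
  have hppm : p + 1 ≤ m := by omega
  have hCne : C p ≠ C (p+1) := by
    obtain ⟨v0, hv0mem, hv0⟩ := hUM p (p+1) (by omega) (by omega) hppm
    rcases Finset.mem_Icc.mp hv0mem with ⟨h1, h2⟩
    rcases (by omega : v0 = p ∨ v0 = p+1) with h0 | h0
    · have h3 := hv0 (p+1) (Finset.mem_Icc.mpr (by omega)) (by omega)
      rw [h0] at h3; omega
    · have h3 := hv0 p (Finset.mem_Icc.mpr (by omega)) (by omega)
      rw [h0] at h3; omega
  obtain ⟨q, d, hqd, hdltq⟩ :
      ∃ q d : ℕ, ((q = p ∧ d = p + 1) ∨ (q = p + 1 ∧ d = p)) ∧ C d < C q := by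
    rcases Nat.lt_or_ge (C p) (C (p+1)) with h | h
    · exact ⟨p+1, p, Or.inr ⟨rfl, rfl⟩, h⟩
    · exact ⟨p, p+1, Or.inl ⟨rfl, rfl⟩, by omega⟩
  have hq1 : p ≤ q ∧ q ≤ p + 1 := by omega
  have hd1 : p ≤ d ∧ d ≤ p + 1 := by omega
  have hCq2 : C q ∈ L'' p := by
    have h1 : C q ∈ L q := hC q (Finset.mem_Icc.mpr ⟨by omega, by omega⟩)
    rw [hLmid q (by omega)] at h1
    rcases Finset.mem_insert.mp h1 with h2 | h2
    · have := hCpos d (by omega) (by omega); omega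
    · exact h2
  set ι : ℕ → ℕ := fun i => if i < p then i else if i = p then q else i + 1 with hιdef
  have hι_lt : ∀ i, i < p → ι i = i := by
    intro i h; simp only [hιdef]; rw [if_pos h]
  have hι_p : ι p = q := by
    simp only [hιdef]; rw [if_neg (by omega : ¬ p < p)]; simp
  have hι_gt : ∀ i, p < i → ι i = i + 1 := by
    intro i h; simp only [hιdef]; rw [if_neg (by omega), if_neg (by omega)]
  clear_value ι
  clear hιdef
  have hιmono : ∀ u1 u2, u1 < u2 → ι u1 < ι u2 := by
    intro u1 u2 h
    rcases lt_trichotomy u1 p with h1 | h1 | h1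
    · rw [hι_lt u1 h1]
      rcases lt_trichotomy u2 p with h2 | h2 | h2
      · rw [hι_lt u2 h2]; omega
      · rw [h2, hι_p]; omega
      · rw [hι_gt u2 h2]; omega
    · rw [h1, hι_p]
      rcases lt_trichotomy u2 p with h2 | h2 | h2
      · exact absurd h2 (by omega)
      · exact absurd h2 (by omega)
      · rw [hι_gt u2 h2]; omega
    · rw [hι_gt u1 h1, hι_gt u2 (by omega)]; omega
  set C' : ℕ → ℕ := fun i => C (ι i) - 1 with hC'def
  have hC'mem : ∀ i ∈ Finset.Icc 1 (m-1), C' i ∈ L' i := by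
    intro i hi
    rcases Finset.mem_Icc.mp hi with ⟨h1, h2⟩
    rcases lt_trichotomy i p with h3 | h3 | h3
    · have hmem : C i ∈ L'' i := by
        have h4 := hC i (Finset.mem_Icc.mpr ⟨h1, by omega⟩)
        rwa [hLlt i h3] at h4
      rw [hL''mem] at hmem
      obtain ⟨a, ha, hae⟩ := hmem
      simp only [hC'def]
      rw [hι_lt i h3, show C i - 1 = a by omega]
      exact ha
    · rw [h3]
      rw [hL''mem] at hCq2
      obtain ⟨a, ha, hae⟩ := hCq2
      simp only [hC'def]
      rw [hι_p, show C q - 1 = a by omega]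
      exact ha
    · have hmem : C (i+1) ∈ L'' i := by
        have h4 := hC (i+1) (Finset.mem_Icc.mpr ⟨by omega, by omega⟩)
        rw [hLgt (i+1) (by omega)] at h4
        simpa using h4
      rw [hL''mem] at hmem
      obtain ⟨a, ha, hae⟩ := hmem
      simp only [hC'def]
      rw [hι_gt i h3, show C (i+1) - 1 = a by omega]
      exact ha
  refine hblock' ⟨C', hC'mem, ?_⟩
  intro s t hs1 hst htm
  rcases Nat.lt_or_ge t p with hA | hA
  · -- case A : t < p
    obtain ⟨v, hvmem, hv⟩ := hUM s t hs1 hst (by omega)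
    rcases Finset.mem_Icc.mp hvmem with ⟨hv1, hv2⟩
    refine ⟨v, hvmem, ?_⟩
    intro u hu hne
    rcases Finset.mem_Icc.mp hu with ⟨hu1, hu2⟩
    have h5 := hv u hu hne
    have hCu : 1 ≤ C u := hCpos u (by omega) (by omega)
    simp only [hC'def]
    rw [hι_lt u (by omega), hι_lt v (by omega)]
    omega
  rcases Nat.lt_or_ge p s with hB | hB
  · -- case C : p < s
    obtain ⟨v, hvmem, hv⟩ := hUM (s+1) (t+1) (by omega) (by omega) (by omega)
    rcases Finset.mem_Icc.mp hvmem with ⟨hv1, hv2⟩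
    refine ⟨v - 1, Finset.mem_Icc.mpr ⟨by omega, by omega⟩, ?_⟩
    intro u hu hne
    rcases Finset.mem_Icc.mp hu with ⟨hu1, hu2⟩
    have h5 := hv (u+1) (Finset.mem_Icc.mpr ⟨by omega, by omega⟩) (by omega)
    have hCu : 1 ≤ C (u+1) := hCpos (u+1) (by omega) (by omega)
    simp only [hC'def]
    rw [hι_gt u (by omega), hι_gt (v-1) (by omega), show v - 1 + 1 = v by omega]
    omega
  · -- case B : s ≤ p ≤ t
    obtain ⟨v, hvmem, hv⟩ := hUM s (t+1) hs1 (by omega) (by omega)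
    rcases Finset.mem_Icc.mp hvmem with ⟨hv1, hv2⟩
    have hqmem : q ∈ Finset.Icc s (t+1) := Finset.mem_Icc.mpr ⟨by omega, by omega⟩
    have hvne_d : v ≠ d := by
      intro h0
      have h3 := hv q hqmem (by omega)
      rw [h0] at h3
      omega
    obtain ⟨w, hιw, hws, hwt⟩ : ∃ w, ι w = v ∧ s ≤ w ∧ w ≤ t := by
      rcases (by omega : v < p ∨ (v = p ∨ v = p + 1) ∨ p + 2 ≤ v) with h3 | h3 | h3
      · exact ⟨v, hι_lt v h3, by omega, by omega⟩
      · have hvq : v = q := by rcases hqd with ⟨hq, hd⟩ | ⟨hq, hd⟩ <;> omega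
        exact ⟨p, by rw [hι_p, ← hvq], by omega, by omega⟩
      · refine ⟨v - 1, ?_, by omega, by omega⟩
        rw [hι_gt (v-1) (by omega)]; omega
    refine ⟨w, Finset.mem_Icc.mpr ⟨hws, hwt⟩, ?_⟩
    intro u hu hne
    rcases Finset.mem_Icc.mp hu with ⟨hu1, hu2⟩
    have hιu_mem : s ≤ ι u ∧ ι u ≤ t + 1 := by
      rcases lt_trichotomy u p with h3 | h3 | h3
      · rw [hι_lt u h3]; omega
      · rw [h3, hι_p]; omega
      · rw [hι_gt u h3]; omega
    have hιu_ne : ι u ≠ v := by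
      rw [← hιw]
      intro hEq
      rcases lt_trichotomy u w with h | h | h
      · exact absurd hEq (Nat.ne_of_lt (hιmono u w h))
      · exact hne h
      · exact absurd hEq.symm (Nat.ne_of_lt (hιmono w u h))
    have h5 := hv (ι u) (Finset.mem_Icc.mpr hιu_mem) hιu_ne
    have hCu : 1 ≤ C (ι u) := hCpos (ι u) (by omega) (by omega)
    simp only [hC'def]
    rw [hιw]
    omega

/-- For positive integers `x₁ ≥ … ≥ xₙ` with `∑ 2^{-xᵢ} ≥ 1`, there exists a family of
lists of positive integers with `|L_i| = x_i` from which the discrete interval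
hypergraph `H_n` admits no unique-maximum coloring. -/
theorem exists_lists_no_um_coloring (n : ℕ) (hn : 1 ≤ n) (x : ℕ → ℕ)
    (hpos : ∀ i ∈ Finset.Icc 1 n, 0 < x i)
    (hmono : ∀ i ∈ Finset.Icc 1 n, ∀ j ∈ Finset.Icc 1 n, i ≤ j → x j ≤ x i)
    (hsum : 1 ≤ ∑ i ∈ Finset.Icc 1 n, (2 : ℝ) ^ (-(x i : ℤ))) :
    ∃ L : ℕ → Finset ℕ,
      (∀ i ∈ Finset.Icc 1 n, (L i).card = x i) ∧
      (∀ i ∈ Finset.Icc 1 n, ∀ c ∈ L i, 0 < c) ∧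
      ¬ ∃ C : ℕ → ℕ, (∀ i ∈ Finset.Icc 1 n, C i ∈ L i) ∧
        ∀ s t : ℕ, 1 ≤ s → s ≤ t → t ≤ n →
          ∃ v ∈ Finset.Icc s t, ∀ u ∈ Finset.Icc s t, u ≠ v → C u < C v := by
  classical
  set D := x 1 with hDdef
  have h1n : (1:ℕ) ∈ Finset.Icc 1 n := by simp only [Finset.mem_Icc]; omega
  have hxD : ∀ i ∈ Finset.Icc 1 n, x i ≤ D := by
    intro i hi
    exact hmono 1 h1n i hi (by simp only [Finset.mem_Icc] at hi; omega)
  -- integer form of the sum hypothesis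
  have hint : 2 ^ D ≤ ∑ i ∈ Finset.Icc 1 n, 2 ^ (D - x i) := by
    have hreal : (2:ℝ) ^ D ≤ ((∑ i ∈ Finset.Icc 1 n, 2 ^ (D - x i) : ℕ) : ℝ) := by
      push_cast
      calc (2:ℝ) ^ D = (2:ℝ) ^ D * 1 := by ring
        _ ≤ (2:ℝ) ^ D * ∑ i ∈ Finset.Icc 1 n, (2 : ℝ) ^ (-(x i : ℤ)) := by
            have h2 : (0:ℝ) ≤ (2:ℝ) ^ D := by positivity
            exact mul_le_mul_of_nonneg_left hsum h2
        _ = ∑ i ∈ Finset.Icc 1 n, (2:ℝ) ^ D * (2 : ℝ) ^ (-(x i : ℤ)) := Finset.mul_sum _ _ _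
        _ = ∑ i ∈ Finset.Icc 1 n, ((2:ℝ) ^ (D - x i : ℕ)) := by
            apply Finset.sum_congr rfl
            intro i hi
            have hle := hxD i hi
            have h1 : ((D - x i : ℕ) : ℤ) = (D : ℤ) - (x i : ℤ) := by omega
            have h2 : (2:ℝ) ^ (D - x i : ℕ) = (2:ℝ) ^ (((D - x i : ℕ) : ℤ)) :=
              (zpow_natCast _ _).symm
            rw [h2, h1, sub_eq_add_neg, zpow_add₀ (two_ne_zero : (2:ℝ) ≠ 0), zpow_natCast]
    exact_mod_cast hreal
  -- reversed sequence
  set y : ℕ → ℕ := fun i => x (n + 1 - i) with hydef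
  have hy : ∀ i, y i = x (n + 1 - i) := fun i => rfl
  have hyD : ∀ i ∈ Finset.Icc 1 n, y i ≤ D := by
    intro i hi
    simp only [Finset.mem_Icc] at hi
    rw [hy]
    exact hxD _ (by simp only [Finset.mem_Icc]; omega)
  have hysorted : ∀ i ∈ Finset.Icc 1 n, ∀ j ∈ Finset.Icc 1 n, i ≤ j → y i ≤ y j := by
    intro i hi j hj hij
    simp only [Finset.mem_Icc] at hi hj
    rw [hy, hy]
    exact hmono (n+1-j) (by simp only [Finset.mem_Icc]; omega)
      (n+1-i) (by simp only [Finset.mem_Icc]; omega) (by omega)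
  have hrev : ∑ i ∈ Finset.Icc 1 n, 2 ^ (D - y i) = ∑ i ∈ Finset.Icc 1 n, 2 ^ (D - x i) := by
    apply Finset.sum_bij' (fun i (_ : i ∈ Finset.Icc 1 n) => n + 1 - i)
      (fun i (_ : i ∈ Finset.Icc 1 n) => n + 1 - i)
    · intro a ha; simp only [Finset.mem_Icc] at ha ⊢; omega
    · intro a ha; simp only [Finset.mem_Icc] at ha ⊢; omega
    · intro a ha; simp only [Finset.mem_Icc] at ha; omega
    · intro a ha; simp only [Finset.mem_Icc] at ha; omega
    · intro a ha; rw [hy]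
  have hPn : 2 ^ D ≤ ∑ i ∈ Finset.Icc 1 n, 2 ^ (D - y i) := by rw [hrev]; exact hint
  clear_value y
  clear hydef
  -- minimal truncation point
  have hPex : ∃ k, 2 ^ D ≤ ∑ i ∈ Finset.Icc 1 k, 2 ^ (D - y i) := ⟨n, hPn⟩
  set m := Nat.find hPex with hmdef
  have hm : 2 ^ D ≤ ∑ i ∈ Finset.Icc 1 m, 2 ^ (D - y i) := Nat.find_spec hPex
  have hmn : m ≤ n := Nat.find_min' hPex hPn
  have hm0 : 1 ≤ m := by
    rcases Nat.eq_zero_or_pos m with h0 | h0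
    · rw [h0] at hm
      simp only [show Finset.Icc 1 0 = ∅ from rfl, Finset.sum_empty] at hm
      have := Nat.two_pow_pos D
      omega
    · exact h0
  have hlt : ∑ i ∈ Finset.Icc 1 (m-1), 2 ^ (D - y i) < 2 ^ D := by
    have h6 : ¬ 2 ^ D ≤ ∑ i ∈ Finset.Icc 1 (m-1), 2 ^ (D - y i) :=
      Nat.find_min hPex (show m - 1 < m by omega)
    omega
  have hm' : m - 1 + 1 = m := by omega
  have hsplitm := Finset.sum_Icc_succ_top (a := 1) (b := m - 1) (by omega)
    (fun i => (2:ℕ) ^ (D - y i))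
  rw [hm'] at hsplitm
  have hdvd : (2:ℕ) ^ (D - y m) ∣ ∑ i ∈ Finset.Icc 1 (m-1), 2 ^ (D - y i) := by
    apply Finset.dvd_sum
    intro i hi
    simp only [Finset.mem_Icc] at hi
    apply pow_dvd_pow
    have h1 : y i ≤ y m := hysorted i (by simp only [Finset.mem_Icc]; omega)
      m (by simp only [Finset.mem_Icc]; omega) (by omega)
    omega
  have hdvdD : (2:ℕ) ^ (D - y m) ∣ 2 ^ D := pow_dvd_pow 2 (by omega)
  have hfm : ∑ i ∈ Finset.Icc 1 m, 2 ^ (D - y i) = 2 ^ D := by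
    obtain ⟨a, ha⟩ := hdvd
    obtain ⟨b, hb⟩ := hdvdD
    have hc : 0 < (2:ℕ) ^ (D - y m) := Nat.two_pow_pos _
    have hab : a < b := by
      have h4 : (2:ℕ) ^ (D - y m) * a < 2 ^ (D - y m) * b := by rw [← ha, ← hb]; exact hlt
      exact Nat.lt_of_mul_lt_mul_left h4
    have h5 : ∑ i ∈ Finset.Icc 1 m, 2 ^ (D - y i) ≤ 2 ^ D := by
      rw [hsplitm, ha, hb]
      calc 2 ^ (D - y m) * a + 2 ^ (D - y m) = 2 ^ (D - y m) * (a + 1) := by ring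
        _ ≤ 2 ^ (D - y m) * b := Nat.mul_le_mul_left _ (by omega)
    omega
  obtain ⟨Lc, hLcard, hLpos, hLblock⟩ := core_blocked m D y
    (fun i hi => hyD i (by simp only [Finset.mem_Icc] at hi ⊢; omega))
    (fun i hi j hj hij => hysorted i (by simp only [Finset.mem_Icc] at hi ⊢; omega)
      j (by simp only [Finset.mem_Icc] at hj ⊢; omega) hij)
    hfm
  set L : ℕ → Finset ℕ := fun j =>
    if n - m < j then Lc (n + 1 - j) else Finset.Icc 1 (x j) with hLdef
  have hLhigh : ∀ j, n - m < j → L j = Lc (n + 1 - j) := by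
    intro j h; simp only [hLdef]; rw [if_pos h]
  have hLlow : ∀ j, ¬ (n - m < j) → L j = Finset.Icc 1 (x j) := by
    intro j h; simp only [hLdef]; rw [if_neg h]
  clear_value L
  clear hLdef
  refine ⟨L, ?_, ?_, ?_⟩
  · intro j hj
    simp only [Finset.mem_Icc] at hj
    by_cases h : n - m < j
    · rw [hLhigh j h, hLcard (n+1-j) (by simp only [Finset.mem_Icc]; omega), hy,
        show n + 1 - (n + 1 - j) = j by omega]
    · rw [hLlow j h, Nat.card_Icc]
      omega
  · intro j hj c hc
    simp only [Finset.mem_Icc] at hj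
    by_cases h : n - m < j
    · rw [hLhigh j h] at hc
      exact hLpos (n+1-j) (by simp only [Finset.mem_Icc]; omega) c hc
    · rw [hLlow j h, Finset.mem_Icc] at hc
      omega
  · rintro ⟨C, hC, hUM⟩
    apply hLblock
    refine ⟨fun i => C (n + 1 - i), ?_, ?_⟩
    · intro i hi
      simp only [Finset.mem_Icc] at hi
      have h1 := hC (n+1-i) (by simp only [Finset.mem_Icc]; omega)
      rw [hLhigh (n+1-i) (by omega), show n + 1 - (n + 1 - i) = i by omega] at h1
      exact h1
    · intro s t h1 h2 h3
      obtain ⟨v, hvmem, hv⟩ := hUM (n+1-t) (n+1-s) (by omega) (by omega) (by omega)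
      simp only [Finset.mem_Icc] at hvmem
      refine ⟨n + 1 - v, by simp only [Finset.mem_Icc]; omega, ?_⟩
      intro u hu hne
      simp only [Finset.mem_Icc] at hu
      have h4 := hv (n+1-u) (by simp only [Finset.mem_Icc]; omega) (by omega)
      simpa [show n + 1 - (n + 1 - v) = v by omega] using h4
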